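/- Let K = F_{2^m}, let φ be a field automorphism of K, let 2 ≤ k ≤ m, let u_{1,1} ∈ K, and for 2 ≤ i ≤ k let u_{i,1}, u_{i,2} ∈ K satisfy u_{i,1} = φ(u_{i,2}) and Tr_{2^m/2}(φ^{−1}(u_{1,1})·u_{i,2}) = 0. Let R : F_2^{k−1} → F_2 be any function and define F : K × K → K × K by F(y,z) = (y·φ(z), z) + R(Tr_{2^m/2}(u_{2,1}y + u_{2,2}z), …, Tr_{2^m/2}(u_{k,1}y + u_{k,2}z))·(u_{1,1}·y, 0), the value of R being identified with 0 or 1 in K. Then for every (a,b) ∈ K × K with a ≠ 0, the component function F_{(a,b)}(y,z) = Tr_{2^m/2}(a·(yφ(z) + R(…)·u_{1,1}y)) + Tr_{2^m/2}(b·z) is bent on K × K. -/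

import Mathlib

open scoped Classical BigOperators

noncomputable section

/-- The finite field `K = F_{2^m}`. -/
abbrev K (m : ℕ) := GaloisField 2 m

noncomputable instance (m : ℕ) : Fintype (K m) := Fintype.ofFinite _

/-- The absolute trace `Tr_{2^m/2}` of `K`, viewed as an element of `K`
(its values lie in the prime field `{0,1}`). -/
def trm (m : ℕ) (x : K m) : K m := ∑ j ∈ Finset.range m, x ^ 2 ^ j

/-- `(-1)^b` for `b ∈ {0,1} ⊆ K`. -/
def chiK (m : ℕ) (x : K m) : ℤ := if x = 0 then 1 else -1

/-- The inner product `⟨(y₁,z₁),(y₂,z₂)⟩ = Tr(y₁y₂) + Tr(z₁z₂)` on `V = K × K`. -/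
def ip (m : ℕ) (w v : K m × K m) : K m := trm m (w.1 * v.1) + trm m (w.2 * v.2)

/-- The Walsh transform of a Boolean-valued function on `V = K × K`. -/
def walshV (m : ℕ) (f : K m × K m → K m) (w : K m × K m) : ℤ :=
  ∑ v : K m × K m, chiK m (f v + ip m w v)

section aux
variable (m : ℕ)

lemma Kcard (hm : 1 ≤ m) : Fintype.card (K m) = 2 ^ m := by
  rw [← Nat.card_eq_fintype_card]
  exact GaloisField.card 2 m (by omega)

lemma Kpow_card (hm : 1 ≤ m) (x : K m) : x ^ 2 ^ m = x := by
  have := FiniteField.pow_card x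
  rwa [Kcard m hm] at this

lemma trm_add (x y : K m) : trm m (x + y) = trm m x + trm m y := by
  unfold trm
  rw [← Finset.sum_add_distrib]
  exact Finset.sum_congr rfl fun j _ => add_pow_char_pow ..

lemma trm_zero : trm m 0 = 0 := by
  unfold trm
  refine Finset.sum_eq_zero fun j _ => zero_pow (by positivity)

lemma trm_sq (hm : 1 ≤ m) (x : K m) : trm m (x ^ 2) = trm m x := by
  unfold trm
  have h1 : ∀ j : ℕ, (x ^ 2) ^ 2 ^ j = x ^ 2 ^ (j + 1) := by
    intro j; rw [← pow_mul, pow_succ, mul_comm (2^j) 2, pow_mul]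
  calc ∑ j ∈ Finset.range m, (x ^ 2) ^ 2 ^ j
      = ∑ j ∈ Finset.range m, x ^ 2 ^ (j + 1) := Finset.sum_congr rfl fun j _ => h1 j
    _ = ∑ j ∈ Finset.range (m + 1), x ^ 2 ^ j - x ^ 2 ^ 0 := by
        rw [Finset.sum_range_succ' (fun j => x ^ 2 ^ j)]; ring
    _ = ∑ j ∈ Finset.range m, x ^ 2 ^ j := by
        rw [Finset.sum_range_succ, Kpow_card m hm, pow_zero, pow_one]; ring

lemma trm_sq' (hm : 1 ≤ m) (x : K m) : trm m x * trm m x = trm m x := by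
  have h := map_sum (frobenius (K m) 2) (fun j => x ^ 2 ^ j) (Finset.range m)
  simp only [frobenius_def] at h
  have : trm m x * trm m x = trm m (x ^ 2) := by
    unfold trm
    rw [← sq, h]
    exact Finset.sum_congr rfl fun j _ => by rw [← pow_mul, ← pow_mul, mul_comm]
  rw [this, trm_sq m hm]

lemma trm_mem (hm : 1 ≤ m) (x : K m) : trm m x = 0 ∨ trm m x = 1 := by
  have h := trm_sq' m hm x
  have h2 : trm m x * (trm m x - 1) = 0 := by linear_combination h
  rcases mul_eq_zero.mp h2 with h0 | h1
  · exact Or.inl h0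
  · exact Or.inr (by linear_combination h1)

lemma trm_phi (hm : 1 ≤ m) (φ : K m ≃+* K m) (x : K m) : trm m (φ x) = trm m x := by
  have h1 : trm m (φ x) = φ (trm m x) := by
    unfold trm
    rw [map_sum]
    exact Finset.sum_congr rfl fun j _ => (map_pow φ.toRingHom x (2 ^ j)).symm
  rw [h1]
  rcases trm_mem m hm x with h | h <;> rw [h] <;> simp

lemma trm_phi_symm (hm : 1 ≤ m) (φ : K m ≃+* K m) (x y : K m) :
    trm m (x * φ.symm y) = trm m (φ x * y) := by
  rw [← trm_phi m hm φ (x * φ.symm y), map_mul, RingEquiv.apply_symm_apply]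

lemma chiK_sq (x : K m) : chiK m x * chiK m x = 1 := by
  unfold chiK; split <;> norm_num

lemma chiK_add (hm : 1 ≤ m) (x y : K m) (hx : x = 0 ∨ x = 1) (hy : y = 0 ∨ y = 1) :
    chiK m (x + y) = chiK m x * chiK m y := by
  have h2 : (1 : K m) + 1 = 0 := by
    have : (2 : K m) = 0 := by
      have := CharP.cast_eq_zero (K m) 2; exact_mod_cast this
    linear_combination this
  have h10 : (1 : K m) ≠ 0 := one_ne_zero
  unfold chiK
  rcases hx with hx | hx <;> rcases hy with hy | hy <;> subst hx <;> subst hy <;>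
    simp [h2, h10]


lemma trm_exists_ne (hm : 1 ≤ m) : ∃ x : K m, trm m x ≠ 0 := by
  by_contra hcon
  push_neg at hcon
  set p : Polynomial (K m) := ∑ j ∈ Finset.range m, Polynomial.X ^ (2 ^ j) with hp
  have heval : ∀ x, p.eval x = trm m x := by
    intro x; simp [hp, Polynomial.eval_finset_sum, trm]
  have hpne : p ≠ 0 := by
    intro h0
    have hc : p.coeff (2 ^ (m - 1)) = 1 := by
      rw [hp, Polynomial.finset_sum_coeff]
      rw [Finset.sum_eq_single (m - 1)]
      · simp [Polynomial.coeff_X_pow]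
      · intro j hj hne
        simp only [Polynomial.coeff_X_pow, ite_eq_right_iff]
        intro hEq
        exact absurd (Nat.pow_right_injective (le_refl 2) hEq) (Ne.symm hne)
      · intro h; exact absurd (Finset.mem_range.mpr (by omega)) h
    rw [h0] at hc; simp at hc
  have hdeg : p.natDegree ≤ 2 ^ (m - 1) := by
    apply Polynomial.natDegree_sum_le_of_forall_le
    intro j hj
    have hj' := Finset.mem_range.mp hj
    rw [Polynomial.natDegree_X_pow]
    exact Nat.pow_le_pow_right (by norm_num) (by omega)
  have hsub : (Finset.univ : Finset (K m)) ⊆ p.roots.toFinset := by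
    intro x _
    rw [Multiset.mem_toFinset, Polynomial.mem_roots']
    exact ⟨hpne, by rw [Polynomial.IsRoot, heval]; exact hcon x⟩
  have h1 : Fintype.card (K m) ≤ 2 ^ (m - 1) := by
    calc Fintype.card (K m) = (Finset.univ : Finset (K m)).card := (Finset.card_univ).symm
      _ ≤ p.roots.toFinset.card := Finset.card_le_card hsub
      _ ≤ Multiset.card p.roots := p.roots.toFinset_card_le
      _ ≤ p.natDegree := p.card_roots'
      _ ≤ 2 ^ (m - 1) := hdeg
  rw [Kcard m hm] at h1
  have : 2 ^ (m - 1) < 2 ^ m := Nat.pow_lt_pow_right (by norm_num) (by omega)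
  omega

lemma sum_chi (hm : 1 ≤ m) (d : K m) :
    ∑ y : K m, chiK m (trm m (d * y)) = if d = 0 then ((2 : ℤ) ^ m) else 0 := by
  split_ifs with hd
  · subst hd
    have : ∀ y : K m, chiK m (trm m (0 * y)) = 1 := by
      intro y; rw [zero_mul, trm_zero]; simp [chiK]
    rw [Finset.sum_congr rfl fun y _ => this y, Finset.sum_const, Finset.card_univ,
      Kcard m hm]
    simp
  · obtain ⟨x, hx⟩ := trm_exists_ne m hm
    set y₁ := d⁻¹ * x with hy1def
    have hy₁ : trm m (d * y₁) = 1 := by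
      have : d * y₁ = x := by rw [hy1def, ← mul_assoc, mul_inv_cancel₀ hd, one_mul]
      rw [this]
      rcases trm_mem m hm x with h | h
      · exact absurd h hx
      · exact h
    have h2 : (1 : K m) + 1 = 0 := by
      have h2' : (2 : K m) = 0 := by
        have := CharP.cast_eq_zero (K m) 2; exact_mod_cast this
      linear_combination h2'
    have hshift : ∀ y : K m, chiK m (trm m (d * (y + y₁))) = -chiK m (trm m (d * y)) := by
      intro y
      rw [mul_add, trm_add, hy₁]
      rcases trm_mem m hm (d * y) with h | h <;> rw [h] <;> unfold chiK <;>
        simp [h2, one_ne_zero]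
    have hsum := Equiv.sum_comp (Equiv.addRight y₁) (fun y => chiK m (trm m (d * y)))
    simp only [Equiv.coe_addRight] at hsum
    have : ∑ y : K m, chiK m (trm m (d * y))
        = -∑ y : K m, chiK m (trm m (d * y)) := by
      conv_lhs => rw [← hsum]
      rw [← Finset.sum_neg_distrib]
      exact Finset.sum_congr rfl fun y _ => hshift y
    omega

end aux

/-- the Maiorana–McFarland based construction
`F(y,z) = (y·φ(z), z) + R(Tr(u_{2,1}y+u_{2,2}z), …, Tr(u_{k,1}y+u_{k,2}z))·(u_{1,1}y, 0)`
has all its components `F_{(a,b)}`, `a ≠ 0`, bent. -/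
theorem stmt11 (m k : ℕ) (hm : 1 ≤ m) (hk2 : 2 ≤ k) (hkm : k ≤ m)
    (φ : K m ≃+* K m)
    (u₁₁ : K m) (uf1 uf2 : ℕ → K m)
    (hu : ∀ i, 2 ≤ i → i ≤ k →
      uf1 i = φ (uf2 i) ∧ trm m (φ.symm u₁₁ * uf2 i) = 0)
    (R : (Fin (k-1) → K m) → K m) (hR : ∀ v, R v = 0 ∨ R v = 1)
    (F : K m × K m → K m × K m)
    (hF : ∀ y z : K m, F (y, z) =
      (y * φ z
        + R (fun j => trm m (uf1 (j.1 + 2) * y + uf2 (j.1 + 2) * z)) * (u₁₁ * y),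
       z)) :
    ∀ a b : K m, a ≠ 0 →
      ∀ w : K m × K m, (walshV m (fun v => ip m (a, b) (F v)) w) ^ 2 = 2 ^ (2*m) := by
  intro a b ha w
  have h2K : (2 : K m) = 0 := by
    have := CharP.cast_eq_zero (K m) 2; exact_mod_cast this
  set c : K m := φ.symm u₁₁ with hc
  set s : K m := a ^ 2 ^ (m - 1) with hs
  have hss : s * s = a := by
    rw [hs, ← pow_add]
    have he : 2 ^ (m - 1) + 2 ^ (m - 1) = 2 ^ m := by
      have hm1 : m - 1 + 1 = m := by omega
      calc 2 ^ (m - 1) + 2 ^ (m - 1) = 2 ^ (m - 1 + 1) := by rw [pow_succ]; ring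
        _ = 2 ^ m := by rw [hm1]
    rw [he, Kpow_card m hm]
  set C : K m := s + φ b + w.1 + φ w.2 with hC
  set T : K m → (Fin (k - 1) → K m) := fun v => fun j => trm m (uf2 (j.1 + 2) * v) with hT
  set M : K m → K m := fun v => a * φ v + R (T v) * (a * u₁₁) + C with hM
  have hu' : ∀ j : Fin (k - 1),
      uf1 (j.1 + 2) = φ (uf2 (j.1 + 2)) ∧ trm m (c * uf2 (j.1 + 2)) = 0 := by
    intro j
    have hj := j.2
    exact hu (j.1 + 2) (by omega) (by omega)
  -- the R-argument simplification
  have harg : ∀ y v : K m,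
      (fun j : Fin (k - 1) =>
        trm m (uf1 (j.1 + 2) * y + uf2 (j.1 + 2) * (v + φ.symm y))) = T v := by
    intro y v
    funext j
    obtain ⟨h1, h2⟩ := hu' j
    rw [h1, mul_add, trm_add, trm_add, ← trm_phi_symm m hm φ (uf2 (j.1 + 2)) y]
    show trm m (uf2 (↑j + 2) * φ.symm y) + (trm m (uf2 (↑j + 2) * v)
      + trm m (uf2 (↑j + 2) * φ.symm y)) = T v j
    have : T v j = trm m (uf2 (↑j + 2) * v) := rfl
    rw [this]
    linear_combination (trm m (uf2 (↑j + 2) * φ.symm y)) * h2K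
  -- the pointwise identity
  have key : ∀ y v : K m,
      ip m (a, b) (F (y, v + φ.symm y)) + ip m w (y, v + φ.symm y)
        = trm m (M v * y) + trm m ((b + w.2) * v) := by
    intro y v
    rw [hF y (v + φ.symm y)]
    simp only [ip]
    rw [harg y v]
    have hφ : φ (v + φ.symm y) = φ v + y := by
      rw [map_add, RingEquiv.apply_symm_apply]
    rw [hφ]
    have e1 : a * (y * (φ v + y) + R (T v) * (u₁₁ * y))
        = a * φ v * y + (s * y) ^ 2 + R (T v) * (a * u₁₁) * y := by
      linear_combination (-(y ^ 2)) * hss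
    have e4 : M v * y = a * φ v * y + R (T v) * (a * u₁₁) * y
        + (s * y + (φ b * y + (w.1 * y + φ w.2 * y))) := by
      rw [hM]; simp only []; rw [hC]; ring
    rw [e1, e4, mul_add b v, mul_add w.2 v, add_mul b w.2]
    simp only [trm_add]
    rw [trm_sq m hm (s * y), trm_phi_symm m hm φ b y, trm_phi_symm m hm φ w.2 y]
    ring
  -- unique zero of M
  have hTc : ∀ (e v : K m), (e = 0 ∨ e = 1) → T (v + e * c) = T v := by
    intro e v he
    funext j
    show trm m (uf2 (↑j + 2) * (v + e * c)) = trm m (uf2 (↑j + 2) * v)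
    rw [mul_add, trm_add]
    rcases he with h | h <;> subst h
    · rw [zero_mul, mul_zero, trm_zero, add_zero]
    · rw [one_mul, mul_comm (uf2 (↑j + 2)) c, (hu' j).2, add_zero]
  set v₀ : K m := φ.symm (a⁻¹ * C) with hv0
  set vstar : K m := v₀ + R (T v₀) * c with hvs
  have hφRc : ∀ t, φ (R t * c) = R t * u₁₁ := by
    intro t
    rcases hR t with h | h <;> rw [h]
    · rw [zero_mul, zero_mul, map_zero]
    · rw [one_mul, one_mul, hc, RingEquiv.apply_symm_apply]
  have hMval : ∀ v : K m, M v = 0 ↔ v = vstar := by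
    intro v
    have hMv : ∀ u : K m, M u = a * φ u + R (T u) * (a * u₁₁) + C := fun u => rfl
    constructor
    · intro h
      rw [hMv v] at h
      have h1 : φ v = R (T v) * u₁₁ + a⁻¹ * C := by
        have hainv : a * a⁻¹ = 1 := mul_inv_cancel₀ ha
        apply mul_left_cancel₀ ha
        linear_combination h - C * hainv - (R (T v) * (a * u₁₁) + C) * h2K
      have hv : v = v₀ + R (T v) * c := by
        have h3 := congrArg φ.symm h1
        rw [RingEquiv.symm_apply_apply, map_add, ← hφRc (T v),
          RingEquiv.symm_apply_apply] at h3
        rw [hv0, add_comm]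
        exact h3
      have hTv : T v = T v₀ := by rw [hv]; exact hTc _ _ (hR _)
      rw [hvs, hv, hTv]
    · intro h
      subst h
      have hTs : T vstar = T v₀ := by rw [hvs]; exact hTc _ _ (hR _)
      have hφv0 : φ v₀ = a⁻¹ * C := by rw [hv0, RingEquiv.apply_symm_apply]
      rw [hMv, hTs, hvs, map_add, hφRc (T v₀), hφv0]
      have hainv : a * a⁻¹ = 1 := mul_inv_cancel₀ ha
      linear_combination C * hainv + (R (T v₀) * (a * u₁₁) + C) * h2K
  -- the Walsh transform computation
  have hW : walshV m (fun v => ip m (a, b) (F v)) w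
      = chiK m (trm m ((b + w.2) * vstar)) * 2 ^ m := by
    unfold walshV
    rw [Fintype.sum_prod_type]
    simp only []
    have hinner : ∀ y : K m,
        ∑ z : K m, chiK m (ip m (a, b) (F (y, z)) + ip m w (y, z))
          = ∑ v : K m, chiK m (trm m (M v * y) + trm m ((b + w.2) * v)) := by
      intro y
      rw [← Equiv.sum_comp (Equiv.addRight (φ.symm y))
        (fun z => chiK m (ip m (a, b) (F (y, z)) + ip m w (y, z)))]
      simp only [Equiv.coe_addRight]
      exact Finset.sum_congr rfl fun v _ => by rw [key y v]
    rw [Finset.sum_congr rfl fun y _ => hinner y]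
    rw [Finset.sum_comm]
    have hsplit : ∀ v : K m,
        ∑ y : K m, chiK m (trm m (M v * y) + trm m ((b + w.2) * v))
          = (if M v = 0 then (2 : ℤ) ^ m else 0) * chiK m (trm m ((b + w.2) * v)) := by
      intro v
      have h1 : ∀ y : K m, chiK m (trm m (M v * y) + trm m ((b + w.2) * v))
          = chiK m (trm m (M v * y)) * chiK m (trm m ((b + w.2) * v)) :=
        fun y => chiK_add m hm _ _ (trm_mem m hm _) (trm_mem m hm _)
      rw [Finset.sum_congr rfl fun y _ => h1 y, ← Finset.sum_mul, sum_chi m hm (M v)]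
    rw [Finset.sum_congr rfl fun v _ => hsplit v]
    have h2 : ∀ v : K m,
        (if M v = 0 then (2 : ℤ) ^ m else 0) * chiK m (trm m ((b + w.2) * v))
          = if v = vstar then chiK m (trm m ((b + w.2) * vstar)) * 2 ^ m else 0 := by
      intro v
      by_cases h : v = vstar
      · subst h
        rw [if_pos ((hMval vstar).mpr rfl), if_pos rfl]
        ring
      · rw [if_neg (fun hM0 => h ((hMval v).mp hM0)), if_neg h, zero_mul]
    rw [Finset.sum_congr rfl fun v _ => h2 v,
      Finset.sum_ite_eq' Finset.univ vstar
        (fun _ => chiK m (trm m ((b + w.2) * vstar)) * 2 ^ m)]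
    simp
  rw [hW, mul_pow]
  rw [sq (chiK m (trm m ((b + w.2) * vstar))), chiK_sq m, one_mul, ← pow_mul]
  ring
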